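/- Let d ≥ 1, N ≥ 0, and let c_0, c_1, …, c_N be arbitrary real numbers. Define a sequence of square real matrices A_0, A_1, …, A_N, where A_m is indexed by multi-indices of order m, by the recursion A_0 = c_N · I and A_{m+1} = c_{N−m−1} · I + E^{m+1}_{m} · A_m · (E^{m+1}_{m})^T for 0 ≤ m ≤ N−1. Then this telescoping form satisfies A_N = ∑_{j=0}^{N} c_j · E^N_{N−j} · (E^N_{N−j})^T. -/

import Mathlib

open Matrix
open scoped Nat

/-- Multi-indices of dimension `d+1` and order `N`. -/
abbrev MIdx (d N : ℕ) := {α : Fin (d + 1) → ℕ // ∑ i, α i = N}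

instance (d N : ℕ) : Fintype (MIdx d N) :=
  Fintype.subtype (Finset.Nat.antidiagonalTuple (d + 1) N) fun _ =>
    Finset.Nat.mem_antidiagonalTuple

/-- The degree elevation matrix `E^n_m` (from degree `m` to degree `n`, `m ≤ n`), with
entries `(E^n_m)_{αβ} = C^m_β ⬝ C^{n-m}_{α-β} / C^n_α` when `β ≤ α` componentwise,
and `0` otherwise.  In particular `E^{m+1}_m` is the one-degree elevation matrix with
nonzero entries exactly `(E^{m+1}_m)_{β+e_j, β} = (β_j + 1)/(m+1)`. -/
noncomputable def elev (d n m : ℕ) : Matrix (MIdx d n) (MIdx d m) ℝ :=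
  Matrix.of fun α β =>
    if ∀ i, β.1 i ≤ α.1 i then
      ((Nat.multinomial Finset.univ β.1 * Nat.multinomial Finset.univ (α.1 - β.1) : ℕ) : ℝ) /
        (Nat.multinomial Finset.univ α.1 : ℝ)
    else 0

lemma mnom_ne_zero {n : ℕ} (f : Fin n → ℕ) :
    (Nat.multinomial Finset.univ f : ℝ) ≠ 0 := by
  exact_mod_cast (Nat.multinomial_pos Finset.univ f).ne'

lemma mnom_of_sum_le_one {n : ℕ} (f : Fin n → ℕ) (h : ∑ i, f i ≤ 1) :
    Nat.multinomial Finset.univ f = 1 := by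
  have hs := Nat.multinomial_spec Finset.univ f
  rw [Nat.factorial_eq_one.mpr h] at hs
  exact Nat.eq_one_of_mul_eq_one_left hs

lemma pascal {n : ℕ} (δ : Fin n → ℕ) (h : 0 < ∑ i, δ i) :
    ∑ j ∈ Finset.univ.filter (fun j => 0 < δ j),
      Nat.multinomial Finset.univ (δ - Pi.single j 1) = Nat.multinomial Finset.univ δ := by
  have hP : 0 < ∏ i, (δ i)! := Finset.prod_pos fun i _ => Nat.factorial_pos _
  apply Nat.eq_of_mul_eq_mul_left hP
  rw [Nat.multinomial_spec, Finset.mul_sum]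
  have hterm : ∀ j ∈ Finset.univ.filter (fun j => 0 < δ j),
      (∏ i, (δ i)!) * Nat.multinomial Finset.univ (δ - Pi.single j 1)
        = δ j * ((∑ i, δ i) - 1)! := by
    intro j hj
    have hj' : 0 < δ j := (Finset.mem_filter.mp hj).2
    set g := δ - Pi.single j 1 with hg
    have hgi : ∀ i, g i = if i = j then δ j - 1 else δ i := by
      intro i
      by_cases hij : i = j <;> simp [hg, hij, Pi.single_apply]
    have hsum : ∑ i, g i = (∑ i, δ i) - 1 := by
      have h2 : ∀ i ∈ Finset.univ, g i = δ i - (Pi.single j 1 : Fin n → ℕ) i := fun i _ => by rw [hg]; rfl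
      rw [Finset.sum_congr rfl h2, Finset.sum_tsub_distrib]
      · simp
      · intro i _
        by_cases hij : i = j <;> simp [hij, Pi.single_apply] <;> omega
    have hprod : ∏ i, (δ i)! = δ j * ∏ i, (g i)! := by
      rw [← Finset.mul_prod_erase Finset.univ _ (Finset.mem_univ j),
          ← Finset.mul_prod_erase Finset.univ (fun i => (g i)!) (Finset.mem_univ j),
          ← mul_assoc, hgi j, if_pos rfl, Nat.mul_factorial_pred hj'.ne']
      congr 1
      refine Finset.prod_congr rfl fun i hi => ?_
      rw [hgi i, if_neg (Finset.mem_erase.mp hi).1]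
    rw [hprod, mul_assoc, Nat.multinomial_spec, hsum]
  rw [Finset.sum_congr rfl hterm, ← Finset.sum_mul]
  have : ∑ j ∈ Finset.univ.filter (fun j => 0 < δ j), δ j = ∑ j, δ j := by
    apply Finset.sum_filter_of_ne
    intro j _ hj
    exact Nat.pos_of_ne_zero hj
  rw [this, Nat.mul_factorial_pred h.ne']

lemma elev_diag (d n : ℕ) : elev d n n = 1 := by
  ext α β
  by_cases h : ∀ i, β.1 i ≤ α.1 i
  · have hab : β.1 = α.1 := by
      funext i
      by_contra hne
      have hlt : β.1 i < α.1 i := lt_of_le_of_ne (h i) hne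
      have := Finset.sum_lt_sum (fun i _ => h i) ⟨i, Finset.mem_univ i, hlt⟩
      rw [α.2, β.2] at this
      exact lt_irrefl _ this
    have hβα : β = α := Subtype.ext hab
    subst hβα
    have h0 : β.1 - β.1 = 0 := by funext i; simp
    rw [Matrix.one_apply_eq]
    simp only [elev, Matrix.of_apply, if_pos h, h0]
    rw [mnom_of_sum_le_one (0 : Fin (d+1) → ℕ) (by simp)]
    rw [Nat.mul_one]
    exact div_self (mnom_ne_zero _)
  · have hne : α ≠ β := by rintro rfl; exact h fun i => le_refl _
    simp [elev, h, Matrix.one_apply_ne hne]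

lemma elev_comp (d m k : ℕ) (hk : k ≤ m) :
    elev d (m + 1) m * elev d m k = elev d (m + 1) k := by
  ext α γ
  rw [Matrix.mul_apply]
  by_cases h : ∀ i, γ.1 i ≤ α.1 i
  · have hrhs : elev d (m + 1) k α γ =
        ((Nat.multinomial Finset.univ γ.1 * Nat.multinomial Finset.univ (α.1 - γ.1) : ℕ) : ℝ) /
          (Nat.multinomial Finset.univ α.1 : ℝ) := by
      simp [elev, h]
    rw [hrhs]
    set S := Finset.univ.filter (fun j : Fin (d + 1) => γ.1 j < α.1 j) with hS
    set T := Finset.univ.filter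
      (fun β : MIdx d m => (∀ i, β.1 i ≤ α.1 i) ∧ ∀ i, γ.1 i ≤ β.1 i) with hT
    have hsubset : ∑ β : MIdx d m, elev d (m + 1) m α β * elev d m k β γ
        = ∑ β ∈ T, elev d (m + 1) m α β * elev d m k β γ := by
      symm
      apply Finset.sum_subset (Finset.subset_univ T)
      intro β _ hβ
      rw [hT, Finset.mem_filter] at hβ
      push_neg at hβ
      by_cases h1 : ∀ i, β.1 i ≤ α.1 i
      · have h2 := hβ (Finset.mem_univ β) h1
        simp [elev, h2]
      · simp [elev, h1]
    rw [hsubset]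
    -- the candidate β's : α minus a unit vector
    have hbval : ∀ j : Fin (d + 1), γ.1 j < α.1 j →
        ∑ i, (α.1 - Pi.single j 1 : Fin (d + 1) → ℕ) i = m := by
      intro j hj
      have hle : ∀ i ∈ Finset.univ, (Pi.single j 1 : Fin (d + 1) → ℕ) i ≤ α.1 i := by
        intro i _
        by_cases hij : i = j <;> simp [hij, Pi.single_apply] <;> omega
      have : ∀ i ∈ Finset.univ, (α.1 - Pi.single j 1 : Fin (d + 1) → ℕ) i
          = α.1 i - (Pi.single j 1 : Fin (d + 1) → ℕ) i := fun i _ => rfl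
      rw [Finset.sum_congr rfl this, Finset.sum_tsub_distrib Finset.univ hle, α.2]
      simp
    set g : Fin (d + 1) → ℝ := fun j =>
      ((Nat.multinomial Finset.univ γ.1 *
          Nat.multinomial Finset.univ (α.1 - γ.1 - Pi.single j 1) : ℕ) : ℝ) /
        (Nat.multinomial Finset.univ α.1 : ℝ) with hgdef
    have hbij : ∑ β ∈ T, elev d (m + 1) m α β * elev d m k β γ = ∑ j ∈ S, g j := by
      symm
      refine Finset.sum_bij
        (i := fun j hj => (⟨α.1 - Pi.single j 1,
          hbval j ((Finset.mem_filter.mp hj).2)⟩ : MIdx d m)) ?_ ?_ ?_ ?_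
      · -- maps into T
        intro j hj
        have hj' : γ.1 j < α.1 j := (Finset.mem_filter.mp hj).2
        rw [hT, Finset.mem_filter]
        refine ⟨Finset.mem_univ _, fun i => ?_, fun i => ?_⟩
        · exact Nat.sub_le _ _
        · by_cases hij : i = j
          · subst hij
            simp only [Pi.sub_apply, Pi.single_eq_same]
            omega
          · have := h i
            simp only [Pi.sub_apply, Pi.single_apply, if_neg hij]
            omega
      · -- injective
        intro j₁ hj₁ j₂ hj₂ heq
        by_contra hne
        have h1 : γ.1 j₂ < α.1 j₂ := (Finset.mem_filter.mp hj₂).2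
        have hne' : ¬ j₂ = j₁ := fun e => hne e.symm
        have := congrArg (fun β : MIdx d m => β.1 j₂) heq
        simp only [Pi.sub_apply, Pi.single_apply, if_neg hne', eq_self_iff_true, if_true] at this
        omega
      · -- surjective
        intro β hβ
        rw [hT, Finset.mem_filter] at hβ
        obtain ⟨-, hβα, hγβ⟩ := hβ
        set u : Fin (d + 1) → ℕ := fun i => α.1 i - β.1 i with hu
        have hsu : ∑ i, u i = 1 := by
          have : ∀ i ∈ Finset.univ, u i = α.1 i - β.1 i := fun i _ => rfl
          rw [Finset.sum_congr rfl this,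
            Finset.sum_tsub_distrib Finset.univ (fun i _ => hβα i), α.2, β.2]
          omega
        have hex : ∃ j, u j ≠ 0 := by
          by_contra hall
          push_neg at hall
          rw [Finset.sum_eq_zero (fun i _ => hall i)] at hsu
          omega
        obtain ⟨j, hj⟩ := hex
        have hrest : u j = 1 ∧ ∀ i, i ≠ j → u i = 0 := by
          have hsplit := Finset.add_sum_erase Finset.univ u (Finset.mem_univ j)
          rw [hsu] at hsplit
          have hz : ∑ i ∈ Finset.univ.erase j, u i = 0 := by omega
          refine ⟨by omega, fun i hi => ?_⟩
          exact Finset.sum_eq_zero_iff.mp hz i (Finset.mem_erase.mpr ⟨hi, Finset.mem_univ i⟩)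
        have hαj : β.1 j + 1 = α.1 j := by
          have := hrest.1
          have h2 := hβα j
          simp only [hu] at this
          omega
        have hjS : j ∈ S := by
          rw [hS, Finset.mem_filter]
          exact ⟨Finset.mem_univ j, by have := hγβ j; omega⟩
        refine ⟨j, hjS, ?_⟩
        apply Subtype.ext
        funext i
        by_cases hij : i = j
        · subst hij
          simp only [Pi.sub_apply, Pi.single_eq_same]
          omega
        · have h0 : u i = 0 := hrest.2 i hij
          have h2 := hβα i
          simp only [hu] at h0
          simp only [Pi.sub_apply, Pi.single_apply, if_neg hij]
          omega
      · -- values agree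
        intro j hj
        have hj' : γ.1 j < α.1 j := (Finset.mem_filter.mp hj).2
        set β : MIdx d m := ⟨α.1 - Pi.single j 1, hbval j hj'⟩ with hβ
        have hβα : ∀ i, β.1 i ≤ α.1 i := fun i => Nat.sub_le _ _
        have hγβ : ∀ i, γ.1 i ≤ β.1 i := by
          intro i
          by_cases hij : i = j
          · subst hij
            simp only [hβ, Pi.sub_apply, Pi.single_eq_same]
            omega
          · have := h i
            simp only [hβ, Pi.sub_apply, Pi.single_apply, if_neg hij]
            omega
        have hαβ : α.1 - β.1 = Pi.single j 1 := by
          funext i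
          by_cases hij : i = j
          · subst hij
            simp only [hβ, Pi.sub_apply, Pi.single_eq_same]
            omega
          · simp only [hβ, Pi.sub_apply, Pi.single_apply, if_neg hij]
            omega
        have hone : Nat.multinomial Finset.univ (α.1 - β.1) = 1 := by
          rw [hαβ]
          apply mnom_of_sum_le_one
          simp
        have hβγ : β.1 - γ.1 = α.1 - γ.1 - Pi.single j 1 := by
          funext i
          simp only [hβ, Pi.sub_apply]
          omega
        rw [hgdef]
        simp only [elev, Matrix.of_apply, if_pos hβα, if_pos hγβ, hone, hβγ]
        push_cast
        have hβ0 : (Nat.multinomial Finset.univ β.1 : ℝ) ≠ 0 := mnom_ne_zero _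
        have hα0 : (Nat.multinomial Finset.univ α.1 : ℝ) ≠ 0 := mnom_ne_zero _
        field_simp
    rw [hbij, hgdef]
    have hδ : ∀ j ∈ S, α.1 - γ.1 - Pi.single j 1
        = (α.1 - γ.1) - Pi.single j 1 := fun j _ => rfl
    have hSδ : S = Finset.univ.filter (fun j => 0 < (α.1 - γ.1) j) := by
      rw [hS]
      apply Finset.filter_congr
      intro j _
      simp only [Pi.sub_apply]
      omega
    have hsum : ∑ i, (α.1 - γ.1 : Fin (d + 1) → ℕ) i = (m + 1) - k := by
      have : ∀ i ∈ Finset.univ, (α.1 - γ.1 : Fin (d + 1) → ℕ) i = α.1 i - γ.1 i :=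
        fun i _ => rfl
      rw [Finset.sum_congr rfl this, Finset.sum_tsub_distrib Finset.univ (fun i _ => h i), α.2, γ.2]
    have hpos : 0 < ∑ i, (α.1 - γ.1 : Fin (d + 1) → ℕ) i := by omega
    calc ∑ j ∈ S, ((Nat.multinomial Finset.univ γ.1 *
            Nat.multinomial Finset.univ (α.1 - γ.1 - Pi.single j 1) : ℕ) : ℝ) /
          (Nat.multinomial Finset.univ α.1 : ℝ)
        = ((Nat.multinomial Finset.univ γ.1 : ℝ) *
            ∑ j ∈ S, (Nat.multinomial Finset.univ (α.1 - γ.1 - Pi.single j 1) : ℝ)) /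
          (Nat.multinomial Finset.univ α.1 : ℝ) := by
          rw [Finset.mul_sum, Finset.sum_div]
          refine Finset.sum_congr rfl fun j _ => ?_
          push_cast
          ring
      _ = ((Nat.multinomial Finset.univ γ.1 *
            Nat.multinomial Finset.univ (α.1 - γ.1) : ℕ) : ℝ) /
          (Nat.multinomial Finset.univ α.1 : ℝ) := by
          rw [← Nat.cast_sum, hSδ, pascal _ hpos]
          push_cast
          ring
  · have hzero : ∀ β : MIdx d m, elev d (m + 1) m α β * elev d m k β γ = 0 := by
      intro β
      by_cases h1 : ∀ i, β.1 i ≤ α.1 i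
      · have h2 : ¬∀ i, γ.1 i ≤ β.1 i := fun h2 => h fun i => (h2 i).trans (h1 i)
        simp [elev, h2]
      · simp [elev, h1]
    rw [Finset.sum_congr rfl fun β _ => hzero β, Finset.sum_const_zero]
    simp [elev, h]


/-- Let `c_0, …, c_N` be arbitrary reals and define `A_0 = c_N • I`,
`A_{m+1} = c_{N-(m+1)} • I + E^{m+1}_m ⬝ A_m ⬝ (E^{m+1}_m)ᵀ` for `0 ≤ m ≤ N-1`.  Then this
telescoping form satisfies `A_N = ∑_{j=0}^N c_j E^N_{N-j} (E^N_{N-j})ᵀ`. -/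
theorem telescoping_form (d N : ℕ) (hd : 1 ≤ d) (c : ℕ → ℝ)
    (A : ∀ m : ℕ, Matrix (MIdx d m) (MIdx d m) ℝ)
    (hA0 : A 0 = c N • (1 : Matrix (MIdx d 0) (MIdx d 0) ℝ))
    (hAstep : ∀ m : ℕ, m + 1 ≤ N →
      A (m + 1) = c (N - (m + 1)) • (1 : Matrix (MIdx d (m + 1)) (MIdx d (m + 1)) ℝ) +
        elev d (m + 1) m * A m * (elev d (m + 1) m)ᵀ) :
    A N = ∑ j : Fin (N + 1), c (j : ℕ) •
        (elev d N (N - (j : ℕ)) * (elev d N (N - (j : ℕ)))ᵀ) := by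
  have key : ∀ m, m ≤ N → A m = ∑ k ∈ Finset.range (m + 1),
      c (N - k) • (elev d m k * (elev d m k)ᵀ) := by
    intro m
    induction m with
    | zero =>
      intro _
      simp [hA0, elev_diag, Matrix.transpose_one]
    | succ m ih =>
      intro hm
      have hm' : m ≤ N := Nat.le_of_succ_le hm
      rw [hAstep m hm, ih hm']
      conv_rhs => rw [Finset.sum_range_succ]
      rw [elev_diag d (m + 1), Matrix.transpose_one, Matrix.mul_one,
        add_comm (c (N - (m + 1)) • (1 : Matrix (MIdx d (m + 1)) (MIdx d (m + 1)) ℝ))]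
      congr 1
      rw [Matrix.mul_sum, Matrix.sum_mul]
      refine Finset.sum_congr rfl fun k hk => ?_
      have hk' : k ≤ m := Nat.lt_succ_iff.mp (Finset.mem_range.mp hk)
      rw [Matrix.mul_smul, Matrix.smul_mul]
      congr 1
      rw [← elev_comp d m k hk', Matrix.transpose_mul]
      simp [Matrix.mul_assoc]
  rw [key N le_rfl]
  have hconv : ∑ j : Fin (N + 1), c (j : ℕ) •
        (elev d N (N - (j : ℕ)) * (elev d N (N - (j : ℕ)))ᵀ)
      = ∑ j ∈ Finset.range (N + 1), c j • (elev d N (N - j) * (elev d N (N - j))ᵀ) :=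
    Fin.sum_univ_eq_sum_range (fun j => c j • (elev d N (N - j) * (elev d N (N - j))ᵀ)) (N + 1)
  rw [hconv, ← Finset.sum_range_reflect]
  refine Finset.sum_congr rfl fun j hj => ?_
  have hjN : j ≤ N := Nat.lt_succ_iff.mp (Finset.mem_range.mp hj)
  have h1 : N + 1 - 1 - j = N - j := by omega
  have h2 : N - (N - j) = j := by omega
  rw [h1, h2]
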